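/- Let Q_ε be symmetric positive definite, p ∈ ℝ^N, Ω = {v ≥ 0 : ‖v‖₀ ≤ m}, and Ω₁ = {w ∈ Ω : wᵀ1 = 1}. Suppose there exists w̃ ∈ Ω₁ with pᵀw̃ > 0. If v̂ minimizes f(v) = ½ vᵀQ_ε v − pᵀv over Ω, then v̂ ≠ 0 and the normalization v̂ / (v̂ᵀ1) maximizes S(w) = pᵀw / √(wᵀQ_ε w) over Ω₁. -/

import Mathlib

open Matrix Finset

theorem stmt_1 (N m : ℕ) (Q : Matrix (Fin N) (Fin N) ℝ) (hQ : Q.PosDef)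
    (p : Fin N → ℝ)
    (Ω Ω₁ : Set (Fin N → ℝ))
    (hΩ : Ω = {v | (∀ i, 0 ≤ v i) ∧ (Finset.univ.filter fun i => v i ≠ 0).card ≤ m})
    (hΩ₁ : Ω₁ = {w ∈ Ω | (∑ i, w i) = 1})
    (hexist : ∃ w ∈ Ω₁, 0 < p ⬝ᵥ w)
    (vh : Fin N → ℝ) (hv : vh ∈ Ω)
    (hmin : ∀ v ∈ Ω,
      (1/2) * (vh ⬝ᵥ Q.mulVec vh) - p ⬝ᵥ vh ≤ (1/2) * (v ⬝ᵥ Q.mulVec v) - p ⬝ᵥ v) :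
    vh ≠ 0 ∧ (∑ i, vh i)⁻¹ • vh ∈ Ω₁ ∧
    ∀ w ∈ Ω₁,
      p ⬝ᵥ w / Real.sqrt (w ⬝ᵥ Q.mulVec w) ≤
        p ⬝ᵥ ((∑ i, vh i)⁻¹ • vh) /
          Real.sqrt (((∑ i, vh i)⁻¹ • vh) ⬝ᵥ Q.mulVec ((∑ i, vh i)⁻¹ • vh)) := by
  -- positivity of quadratic form
  have hpos : ∀ x : Fin N → ℝ, x ≠ 0 → 0 < x ⬝ᵥ Q.mulVec x := by
    intro x hx; simpa using hQ.dotProduct_mulVec_pos hx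
  -- Ω closed under nonnegative scaling
  have hscale : ∀ w ∈ Ω, ∀ t : ℝ, 0 ≤ t → t • w ∈ Ω := by
    intro w hw t ht
    rw [hΩ] at hw ⊢
    obtain ⟨hw1, hw2⟩ := hw
    refine ⟨fun i => mul_nonneg ht (hw1 i), le_trans (Finset.card_le_card ?_) hw2⟩
    intro i hi
    simp only [Finset.mem_filter, Finset.mem_univ, true_and, Pi.smul_apply,
      smul_eq_mul] at hi ⊢
    exact fun h => hi (by rw [h, mul_zero])
  -- expansion of the objective along rays
  have hexp : ∀ (w : Fin N → ℝ) (t : ℝ),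
      (1/2) * ((t • w) ⬝ᵥ Q.mulVec (t • w)) - p ⬝ᵥ (t • w)
        = t^2 * (1/2) * (w ⬝ᵥ Q.mulVec w) - t * (p ⬝ᵥ w) := by
    intro w t
    simp [Matrix.mulVec_smul, dotProduct_smul, smul_dotProduct, smul_eq_mul]
    ring
  set F : ℝ := (1/2) * (vh ⬝ᵥ Q.mulVec vh) - p ⬝ᵥ vh with hF
  -- nonzero elements of Ω₁
  have hne : ∀ w ∈ Ω₁, w ≠ 0 := by
    intro w hw h0
    rw [hΩ₁] at hw
    have := hw.2
    rw [h0] at this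
    simp at this
  -- key upper bound: for w ∈ Ω₁ with r = p⬝w > 0, F ≤ -r²/(2q)
  have hkey : ∀ w ∈ Ω₁, 0 < p ⬝ᵥ w →
      F ≤ -(p ⬝ᵥ w)^2 / (2 * (w ⬝ᵥ Q.mulVec w)) := by
    intro w hw hr
    have hwΩ : w ∈ Ω := by rw [hΩ₁] at hw; exact hw.1
    have hq : 0 < w ⬝ᵥ Q.mulVec w := hpos w (hne w hw)
    set r := p ⬝ᵥ w
    set q := w ⬝ᵥ Q.mulVec w
    have ht : (0:ℝ) ≤ r / q := le_of_lt (div_pos hr hq)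
    have := hmin ((r/q) • w) (hscale w hwΩ (r/q) ht)
    rw [hexp w (r/q)] at this
    calc F ≤ (r/q)^2 * (1/2) * q - (r/q) * r := this
      _ = -r^2 / (2*q) := by field_simp; ring
  -- F < 0
  obtain ⟨wt, hwt, hwtp⟩ := hexist
  have hqwt : 0 < wt ⬝ᵥ Q.mulVec wt := hpos wt (hne wt hwt)
  have hFneg : F < 0 := lt_of_le_of_lt (hkey wt hwt hwtp)
    (div_neg_of_neg_of_pos (by nlinarith) (by linarith))
  -- vh ≠ 0
  have hvh0 : vh ≠ 0 := by
    intro h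
    rw [hF, h] at hFneg
    simp at hFneg
  -- sum positive
  have hvnn : ∀ i, 0 ≤ vh i := by rw [hΩ] at hv; exact hv.1
  have hτ : 0 < ∑ i, vh i := by
    rcases Function.ne_iff.mp hvh0 with ⟨i, hi⟩
    exact Finset.sum_pos' (fun j _ => hvnn j)
      ⟨i, Finset.mem_univ i, lt_of_le_of_ne (hvnn i) (Ne.symm hi)⟩
  set τ := ∑ i, vh i with hτdef
  set what : Fin N → ℝ := τ⁻¹ • vh with hwhat
  have hwhatΩ : what ∈ Ω := hscale vh hv τ⁻¹ (le_of_lt (inv_pos.mpr hτ))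
  have hwhatsum : (∑ i, what i) = 1 := by
    simp only [hwhat, Pi.smul_apply, smul_eq_mul, ← Finset.mul_sum]
    exact inv_mul_cancel₀ (ne_of_gt hτ)
  have hwhatΩ₁ : what ∈ Ω₁ := by rw [hΩ₁]; exact ⟨hwhatΩ, hwhatsum⟩
  -- vh = τ • what
  have hvhτ : vh = τ • what := by
    rw [hwhat, smul_smul, mul_inv_cancel₀ (ne_of_gt hτ), one_smul]
  set rh := p ⬝ᵥ what with hrh
  set qh := what ⬝ᵥ Q.mulVec what with hqh
  have hqhpos : 0 < qh := hpos what (hne what hwhatΩ₁)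
  -- F = τ²/2 qh - τ rh
  have hFeq : F = τ^2 * (1/2) * qh - τ * rh := by
    rw [hF, hvhτ, hexp]
  -- rh > 0
  clear_value qh rh what τ F
  have hrhpos : 0 < rh := by
    by_contra h
    push_neg at h
    nlinarith [mul_pos (pow_pos hτ 2) hqhpos, mul_nonpos_of_nonneg_of_nonpos hτ.le h]
  -- F ≥ -rh²/(2 qh)
  have hFlb : -rh^2 / (2*qh) ≤ F := by
    rw [hFeq]
    rw [div_le_iff₀ (by linarith)]
    nlinarith [sq_nonneg (τ * qh - rh)]
  refine ⟨hvh0, hwhatΩ₁, ?_⟩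
  intro w hw
  have hq : 0 < w ⬝ᵥ Q.mulVec w := hpos w (hne w hw)
  set r := p ⬝ᵥ w with hr
  set q := w ⬝ᵥ Q.mulVec w with hqd
  have hsq : 0 < Real.sqrt q := Real.sqrt_pos.mpr hq
  have hsqh : 0 < Real.sqrt qh := Real.sqrt_pos.mpr hqhpos
  rcases le_or_gt r 0 with hrle | hrpos
  · calc r / Real.sqrt q ≤ 0 := div_nonpos_of_nonpos_of_nonneg hrle (le_of_lt hsq)
      _ ≤ rh / Real.sqrt qh := le_of_lt (div_pos hrhpos hsqh)
  · -- r²/q ≤ rh²/qh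
    have h1 : F ≤ -r^2 / (2*q) := hkey w hw hrpos
    have h2 : r^2 / q ≤ rh^2 / qh := by
      rw [div_le_div_iff₀ hq hqhpos]
      have ha : -rh^2 / (2*qh) ≤ -r^2 / (2*q) := le_trans hFlb h1
      rw [div_le_div_iff₀ (by linarith) (by linarith)] at ha
      nlinarith
    have e1 : r / Real.sqrt q = Real.sqrt (r^2 / q) := by
      rw [Real.sqrt_div (sq_nonneg r), Real.sqrt_sq hrpos.le]
    have e2 : rh / Real.sqrt qh = Real.sqrt (rh^2 / qh) := by
      rw [Real.sqrt_div (sq_nonneg rh), Real.sqrt_sq hrhpos.le]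
    rw [e1, e2]
    exact Real.sqrt_le_sqrt h2
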